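/- Let φ ⊂ V* be a root system and (G, (U_α)) a root datum with a family of functions φ_α : U_α → ℝ ∪ {∞} with φ_α⁻¹{∞} = {e}. Suppose there exists an affine space A under V, a point o ∈ A, and an action of N on A by affine automorphisms such that for every α ∈ φ and u ∈ U_α \ {e}, n(u) acts as the reflection with fixed hyperplane M(α, φ_α(u)) = {x ∈ A : α(ox→) + φ_α(u) = 0} whose linear part is r_α. Then the family (φ_α) satisfies axiom (V2.1): φ_{r_α β}(n(u)·v·n(u)⁻¹) = φ_β(v) − ⟨α,β⟩φ_α(u). -/
import Mathlib


/-- If there is an affine space A under V, a base point o, and an action of N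
on A by affine automorphisms such that each n(u) (u ∈ U_α \ {e}) acts as the
reflection with fixed hyperplane M(α, φ_α(u)) and linear part r_α, then the
family (φ_α) satisfies axiom (V2.1). -/
theorem reflection_action_implies_V21 {G ι V A : Type*} [Group G]
    [AddCommGroup V] [Module ℝ V] [AddTorsor V A]
    (lf : ι → V →ₗ[ℝ] ℝ) (cv : ι → V) (rr : ι → ι → ι)
    (hlfr : ∀ α β, lf (rr α β) = lf β - lf β (cv α) • lf α)
    (hlf2 : ∀ α, lf α (cv α) = 2) (hcv : ∀ α, cv α ≠ 0)
    (U : ι → Subgroup G) (n : ι → G → G) (φv : ι → G → WithTop ℝ)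
    (htop : ∀ α, ∀ u ∈ U α, (φv α u = ⊤ ↔ u = 1))
    (hconjU : ∀ α β, ∀ u ∈ U α, u ≠ 1 → ∀ w ∈ U β,
      n α u * w * (n α u)⁻¹ ∈ U (rr α β))
    (hconjn : ∀ α β, ∀ u ∈ U α, u ≠ 1 → ∀ w ∈ U β, w ≠ 1 →
      n (rr α β) (n α u * w * (n α u)⁻¹) = n α u * n β w * (n α u)⁻¹)
    (o : A) (ρ : G → A → A)
    (hmul : ∀ g h x, ρ (g * h) x = ρ g (ρ h x)) (hone : ∀ x, ρ 1 x = x)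
    (href : ∀ α, ∀ u ∈ U α, u ≠ 1 → ∀ k : ℝ, φv α u = (k : WithTop ℝ) →
      ∀ x : A, ρ (n α u) x = (-(lf α (x -ᵥ o) + k)) • cv α +ᵥ x) :
    ∀ α β, ∀ u ∈ U α, u ≠ 1 → ∀ w ∈ U β, w ≠ 1 →
      ∀ ru rw : ℝ, φv α u = (ru : WithTop ℝ) → φv β w = (rw : WithTop ℝ) →
        φv (rr α β) (n α u * w * (n α u)⁻¹)
          = ((rw - lf β (cv α) * ru : ℝ) : WithTop ℝ) := by
  intro α β u hu hu1 w hw hw1 ru rw hru hrw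
  have hv'U : n α u * w * (n α u)⁻¹ ∈ U (rr α β) := hconjU α β u hu hu1 w hw
  have hv'1 : n α u * w * (n α u)⁻¹ ≠ 1 := by
    intro h
    apply hw1
    have h2 := congrArg (fun x => (n α u)⁻¹ * x * n α u) h
    simpa [mul_assoc] using h2
  have hne : φv (rr α β) (n α u * w * (n α u)⁻¹) ≠ ⊤ :=
    fun h => hv'1 ((htop _ _ hv'U).mp h)
  obtain ⟨k, hk⟩ := WithTop.ne_top_iff_exists.mp hne
  have hinv : ∀ x, ρ ((n α u)⁻¹) (ρ (n α u) x) = x := fun x => by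
    rw [← hmul, inv_mul_cancel, hone]
  have hz : ρ (n α u) o = (-ru) • cv α +ᵥ o := by
    rw [href α u hu hu1 ru hru o]
    simp
  have E1 : ρ (n (rr α β) (n α u * w * (n α u)⁻¹)) (ρ (n α u) o)
      = (-(lf (rr α β) (ρ (n α u) o -ᵥ o) + k)) • cv (rr α β) +ᵥ (ρ (n α u) o) :=
    href (rr α β) _ hv'U hv'1 k hk.symm _
  have E2 : ρ (n (rr α β) (n α u * w * (n α u)⁻¹)) (ρ (n α u) o)
      = ρ (n α u) (ρ (n β w) o) := by
    rw [hconjn α β u hu hu1 w hw hw1, hmul, hmul, hinv]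
  have hy : ρ (n β w) o = (-rw) • cv β +ᵥ o := by
    rw [href β w hw hw1 rw hrw o]; simp
  have E3 : ρ (n α u) (ρ (n β w) o)
      = (rw * lf α (cv β) - ru) • cv α +ᵥ ((-rw) • cv β +ᵥ o) := by
    rw [hy, href α u hu hu1 ru hru]
    congr 1
    rw [vadd_vsub]
    simp
    ring
  have Evec : (-(lf (rr α β) (ρ (n α u) o -ᵥ o) + k)) • cv (rr α β) +ᵥ (ρ (n α u) o)
      = (rw * lf α (cv β) - ru) • cv α +ᵥ ((-rw) • cv β +ᵥ o) :=
    E1.symm.trans (E2.trans E3)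
  have Ereal := congrArg (fun p => lf (rr α β) (p -ᵥ o)) Evec
  simp only [hz, vadd_vsub_assoc, vadd_vsub, vsub_self, map_zero, map_add, map_smul,
    smul_eq_mul, hlfr, LinearMap.sub_apply, LinearMap.smul_apply] at Ereal
  have h2g := hlf2 (rr α β)
  rw [hlfr] at h2g
  simp only [LinearMap.sub_apply, LinearMap.smul_apply, smul_eq_mul] at h2g
  have h2a := hlf2 α
  have h2b := hlf2 β
  rw [h2a, h2b, h2g] at Ereal
  have hkval : k = rw - lf β (cv α) * ru := by linear_combination (-1/2 : ℝ) * Ereal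
  rw [← hk, hkval]
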